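/- There is an absolute constant C such that for every positive integer x and every monic polynomial in F_q[T], ∑_{N monic, deg N ≤ x} 1/φ(N) ≤ C·x. -/

import Mathlib

open Polynomial
open scoped Classical

/-- The Euler totient on `F_q[T]`. -/
noncomputable def ffPhi {Fq : Type*} [Field Fq] (R : Polynomial Fq) : ℕ :=
  if R.natDegree = 0 then 1
  else Nat.card {A : Polynomial Fq // A.degree < R.degree ∧ IsCoprime A R}

namespace FFaux
variable {Fq : Type} [Field Fq] [Fintype Fq]

/-- the coprime residue subtype -/
abbrev cop (N : Polynomial Fq) := {A : Polynomial Fq // A.degree < N.degree ∧ IsCoprime A N}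

noncomputable def degLTEquiv (n : ℕ) : {A : Polynomial Fq // A.degree < (n : ℕ)} ≃ (Fin n → Fq) :=
  (Equiv.subtypeEquivRight (fun A => (Polynomial.mem_degreeLT).symm)).trans
    (Polynomial.degreeLTEquiv Fq n).toEquiv

instance finite_degLT (n : ℕ) : Finite {A : Polynomial Fq // A.degree < (n : ℕ)} :=
  Finite.of_equiv _ (degLTEquiv n).symm

lemma card_degLT (n : ℕ) :
    Nat.card {A : Polynomial Fq // A.degree < (n : ℕ)} = Fintype.card Fq ^ n := by
  rw [Nat.card_congr (degLTEquiv n), Nat.card_fun]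
  simp [Nat.card_eq_fintype_card]

lemma cop_finite {N : Polynomial Fq} (hN : N ≠ 0) : Finite (cop N) := by
  have h : N.degree = (N.natDegree : ℕ) := Polynomial.degree_eq_natDegree hN
  exact Finite.of_injective
    (fun A => (⟨A.1, by rw [← h]; exact A.2.1⟩ : {A : Polynomial Fq // A.degree < (N.natDegree : ℕ)}))
    (fun A B hAB => Subtype.ext (by simpa using congrArg Subtype.val hAB))

lemma cop_one_card : Nat.card (cop (1 : Polynomial Fq)) = 1 := by
  have : ∀ A : cop (1 : Polynomial Fq), A = ⟨0, by simp, isCoprime_one_right⟩ := by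
    rintro ⟨A, hA, -⟩
    exact Subtype.ext (by simpa using hA)
  haveI : Unique (cop (1 : Polynomial Fq)) := ⟨⟨_⟩, this⟩
  exact Nat.card_unique

lemma ffPhi_eq_card {N : Polynomial Fq} (hN : N.Monic) : ffPhi N = Nat.card (cop N) := by
  unfold ffPhi
  split_ifs with h
  · rw [hN.natDegree_eq_zero.1 h, cop_one_card]
  · rfl


lemma mod_eq_of {P A B : Polynomial Fq} (hP : P.Monic) (hdvd : P ∣ A - B)
    (hB : B.degree < P.degree) : A %ₘ P = B := by
  have h2 : P ∣ A - A %ₘ P :=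
    ⟨A /ₘ P, by linear_combination - Polynomial.modByMonic_add_div A P⟩
  have h1 : P ∣ A %ₘ P - B := by
    have e : A %ₘ P - B = (A - B) - (A - A %ₘ P) := by ring
    rw [e]; exact dvd_sub hdvd h2
  have hdeg : (A %ₘ P - B).degree < P.degree :=
    lt_of_le_of_lt (Polynomial.degree_sub_le _ _)
      (max_lt (Polynomial.degree_modByMonic_lt A hP) hB)
  exact sub_eq_zero.1 (Polynomial.eq_zero_of_dvd_of_degree_lt h1 hdeg)

lemma coprime_mod_iff {P : Polynomial Fq} (A : Polynomial Fq) (hP : P.Monic) :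
    IsCoprime (A %ₘ P) P ↔ IsCoprime A P := by
  conv_rhs => rw [← Polynomial.modByMonic_add_div A P]
  exact IsCoprime.add_mul_left_left_iff.symm

lemma card_cop_mul_dvd {P M : Polynomial Fq} (hP : P.Monic) (hM : M.Monic)
    (hd : 0 < P.natDegree) (hdvd : P ∣ M) :
    Nat.card (cop (P * M)) = Fintype.card Fq ^ P.natDegree * Nat.card (cop M) := by
  have hPM : (P * M).Monic := hP.mul hM
  have hdegPM : (P * M).degree = ((P.natDegree + M.natDegree : ℕ) : WithBot ℕ) := by
    rw [Polynomial.degree_eq_natDegree hPM.ne_zero, hP.natDegree_mul hM]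
  have e : cop (P * M) ≃ {E : Polynomial Fq // E.degree < (P.natDegree : ℕ)} × cop M := by
    refine ⟨fun A => ⟨⟨A.1 /ₘ M, ?_⟩, ⟨A.1 %ₘ M, Polynomial.degree_modByMonic_lt _ hM,
        (coprime_mod_iff _ hM).2 (A.2.2.of_mul_right_right)⟩⟩,
      fun EB => ⟨M * EB.1.1 + EB.2.1, ?_, ?_⟩, ?_, ?_⟩
    · -- degree (A /ₘ M) < natDegree P
      rcases eq_or_ne (A.1 /ₘ M) 0 with h0 | h0
      · rw [h0, Polynomial.degree_zero]; exact WithBot.bot_lt_coe _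
      · have hA0 : A.1 ≠ 0 := fun h => h0 (by simp [h])
        have hlt : A.1.natDegree < P.natDegree + M.natDegree := by
          rw [Polynomial.natDegree_lt_iff_degree_lt hA0]
          exact hdegPM ▸ A.2.1
        rw [Polynomial.degree_eq_natDegree h0, Polynomial.natDegree_divByMonic _ hM]
        exact_mod_cast (by omega : A.1.natDegree - M.natDegree < P.natDegree)
    · -- degree bound for M * E + B
      refine lt_of_le_of_lt (Polynomial.degree_add_le _ _) (max_lt ?_ ?_)
      · rcases eq_or_ne EB.1.1 0 with h0 | h0
        · rw [h0, mul_zero, Polynomial.degree_zero, hdegPM]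
          exact WithBot.bot_lt_coe _
        · rw [Polynomial.degree_mul, hdegPM, Polynomial.degree_eq_natDegree hM.ne_zero]
          calc (M.natDegree : WithBot ℕ) + EB.1.1.degree
              < (M.natDegree : WithBot ℕ) + (P.natDegree : ℕ) := by
                exact WithBot.add_lt_add_left (by exact WithBot.coe_ne_bot) EB.1.2
            _ = ((P.natDegree + M.natDegree : ℕ) : WithBot ℕ) := by
                push_cast; rw [add_comm]
      · refine lt_of_lt_of_le EB.2.2.1 ?_
        rw [hdegPM, Polynomial.degree_eq_natDegree hM.ne_zero]
        exact_mod_cast Nat.le_add_left _ _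
    · -- coprimality of M * E + B with P * M
      have hBM : IsCoprime (M * EB.1.1 + EB.2.1) M := EB.2.2.2.mul_add_left_left _
      exact (hBM.of_isCoprime_of_dvd_right hdvd).mul_right hBM
    · -- left inverse
      intro A
      refine Subtype.ext ?_
      simp only
      rw [add_comm]
      exact Polynomial.modByMonic_add_div A.1 M
    · -- right inverse
      rintro ⟨⟨E, hE⟩, ⟨B, hB1, hB2⟩⟩
      have hmod : (M * E + B) %ₘ M = B := by
        refine mod_eq_of hM ⟨E, by ring⟩ ?_
        exact lt_of_lt_of_le hB1 (le_of_eq rfl)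
      have hdiv : (M * E + B) /ₘ M = E := by
        have h := Polynomial.modByMonic_add_div (M * E + B) M
        rw [hmod] at h
        have : M * E = M * ((M * E + B) /ₘ M) := by linear_combination - h
        exact (mul_left_cancel₀ hM.ne_zero this).symm
      refine Prod.ext ?_ ?_
      · exact Subtype.ext hdiv
      · exact Subtype.ext hmod
  rw [Nat.card_congr e, Nat.card_prod, card_degLT]

lemma sub_mod_dvd (A : Polynomial Fq) {P : Polynomial Fq} (hP : P.Monic) :
    P ∣ A - A %ₘ P :=
  ⟨A /ₘ P, by linear_combination - Polynomial.modByMonic_add_div A P⟩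

lemma card_cop_mul_coprime {P M : Polynomial Fq} (hP : P.Monic) (hM : M.Monic)
    (h : IsCoprime P M) :
    Nat.card (cop (P * M)) = Nat.card (cop P) * Nat.card (cop M) := by
  have hPM : (P * M).Monic := hP.mul hM
  let f : cop (P * M) → cop P × cop M := fun A =>
    (⟨A.1 %ₘ P, Polynomial.degree_modByMonic_lt _ hP,
       (coprime_mod_iff _ hP).2 A.2.2.of_mul_right_left⟩,
     ⟨A.1 %ₘ M, Polynomial.degree_modByMonic_lt _ hM,
       (coprime_mod_iff _ hM).2 A.2.2.of_mul_right_right⟩)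
  have hbij : Function.Bijective f := by
    constructor
    · rintro A B hAB
      have hp : A.1 %ₘ P = B.1 %ₘ P := congrArg (fun z => (z.1 : Polynomial Fq)) hAB
      have hm : A.1 %ₘ M = B.1 %ₘ M := congrArg (fun z => (z.2 : Polynomial Fq)) hAB
      have h1 : P ∣ A.1 - B.1 := by
        have e : A.1 - B.1 = (A.1 - A.1 %ₘ P) - (B.1 - B.1 %ₘ P) := by rw [hp]; ring
        rw [e]; exact dvd_sub (sub_mod_dvd _ hP) (sub_mod_dvd _ hP)
      have h2 : M ∣ A.1 - B.1 := by
        have e : A.1 - B.1 = (A.1 - A.1 %ₘ M) - (B.1 - B.1 %ₘ M) := by rw [hm]; ring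
        rw [e]; exact dvd_sub (sub_mod_dvd _ hM) (sub_mod_dvd _ hM)
      have hdeg : (A.1 - B.1).degree < (P * M).degree :=
        lt_of_le_of_lt (Polynomial.degree_sub_le _ _) (max_lt A.2.1 B.2.1)
      exact Subtype.ext (sub_eq_zero.1
        (Polynomial.eq_zero_of_dvd_of_degree_lt (h.mul_dvd h1 h2) hdeg))
    · rintro ⟨⟨B, hB1, hB2⟩, ⟨C, hC1, hC2⟩⟩
      obtain ⟨U, V, hUV⟩ := h
      set A0 : Polynomial Fq := C * (U * P) + B * (V * M) with hA0def
      set A : Polynomial Fq := A0 %ₘ (P * M) with hAdef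
      have hPMdvd : P * M ∣ A0 - A := sub_mod_dvd A0 hPM
      have hA0B : P ∣ A0 - B := ⟨C * U - B * U, by linear_combination B * hUV⟩
      have hA0C : M ∣ A0 - C := ⟨B * V - C * V, by linear_combination C * hUV⟩
      have hPA : A %ₘ P = B := by
        refine mod_eq_of hP ?_ hB1
        have e : A - B = (A0 - B) - (A0 - A) := by ring
        rw [e]; exact dvd_sub hA0B ((dvd_mul_right P M).trans hPMdvd)
      have hMA : A %ₘ M = C := by
        refine mod_eq_of hM ?_ hC1
        have e : A - C = (A0 - C) - (A0 - A) := by ring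
        rw [e]; exact dvd_sub hA0C ((dvd_mul_left M P).trans hPMdvd)
      refine ⟨⟨A, Polynomial.degree_modByMonic_lt _ hPM, ?_⟩, ?_⟩
      · refine IsCoprime.mul_right ?_ ?_
        · exact (coprime_mod_iff A hP).1 (by rw [hPA]; exact hB2)
        · exact (coprime_mod_iff A hM).1 (by rw [hMA]; exact hC2)
      · refine Prod.ext ?_ ?_
        · exact Subtype.ext hPA
        · exact Subtype.ext hMA
  rw [Nat.card_congr (Equiv.ofBijective f hbij), Nat.card_prod]

lemma card_cop_irreducible {P : Polynomial Fq} (hP : P.Monic) (hirr : Irreducible P) :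
    Nat.card (cop P) = Fintype.card Fq ^ P.natDegree - 1 := by
  have hd : P.degree = ((P.natDegree : ℕ) : WithBot ℕ) := Polynomial.degree_eq_natDegree hP.ne_zero
  have e1 : cop P ≃ {A : {A : Polynomial Fq // A.degree < ((P.natDegree : ℕ) : WithBot ℕ)} // ¬ A.1 = 0} := by
    refine Equiv.trans (Equiv.subtypeEquivRight
      (q := fun A : Polynomial Fq => A.degree < ((P.natDegree : ℕ) : WithBot ℕ) ∧ ¬ A = 0) ?_)
      (Equiv.subtypeSubtypeEquivSubtypeInter _ _).symm
    intro A
    rw [← hd]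
    constructor
    · rintro ⟨h1, h2⟩
      refine ⟨h1, ?_⟩
      rintro rfl
      exact hirr.not_isUnit (isCoprime_zero_left.1 h2)
    · rintro ⟨h1, h2⟩
      refine ⟨h1, ?_⟩
      have hnd : ¬ P ∣ A := fun hdvd => absurd (Polynomial.degree_le_of_dvd hdvd h2) (not_le.2 h1)
      exact (hirr.coprime_iff_not_dvd.2 hnd).symm
  rw [Nat.card_congr e1]
  haveI : Fintype {A : Polynomial Fq // A.degree < ((P.natDegree : ℕ) : WithBot ℕ)} := Fintype.ofFinite _
  haveI : Unique {A : {A : Polynomial Fq // A.degree < ((P.natDegree : ℕ) : WithBot ℕ)} // A.1 = 0} := by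
    refine ⟨⟨⟨⟨0, by rw [Polynomial.degree_zero]; exact WithBot.bot_lt_coe _⟩, rfl⟩⟩, ?_⟩
    rintro ⟨⟨A, hA⟩, h0⟩
    exact Subtype.ext (Subtype.ext h0)
  have hcompl := Fintype.card_subtype_compl
    (p := fun A : {A : Polynomial Fq // A.degree < ((P.natDegree : ℕ) : WithBot ℕ)} => A.1 = 0)
  have hα : Fintype.card {A : Polynomial Fq // A.degree < ((P.natDegree : ℕ) : WithBot ℕ)}
      = Fintype.card Fq ^ P.natDegree := by
    rw [← Nat.card_eq_fintype_card]; exact card_degLT _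
  rw [Nat.card_eq_fintype_card, hcompl, hα]
  congr 1
  exact Fintype.card_unique

noncomputable def pf (N : Polynomial Fq) : Finset (Polynomial Fq) :=
  (UniqueFactorizationMonoid.normalizedFactors N).toFinset

lemma pf_mem {N P : Polynomial Fq} (h : P ∈ pf N) :
    P.Monic ∧ Irreducible P ∧ P ∣ N := by
  have hm := Multiset.mem_toFinset.1 h
  have hirr := UniqueFactorizationMonoid.irreducible_of_normalized_factor P hm
  have hnorm := UniqueFactorizationMonoid.normalize_normalized_factor P hm
  have hmonic : P.Monic := by
    have := Polynomial.monic_normalize (p := P) hirr.ne_zero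
    rwa [hnorm] at this
  exact ⟨hmonic, hirr, UniqueFactorizationMonoid.dvd_of_mem_normalizedFactors hm⟩

lemma pf_one : pf (1 : Polynomial Fq) = ∅ := by
  simp [pf, UniqueFactorizationMonoid.normalizedFactors_one]

lemma pf_mul_irreducible {P M : Polynomial Fq} (hP : P.Monic) (hPirr : Irreducible P)
    (hM : M ≠ 0) : pf (P * M) = insert P (pf M) := by
  rw [pf, UniqueFactorizationMonoid.normalizedFactors_mul hPirr.ne_zero hM,
    UniqueFactorizationMonoid.normalizedFactors_irreducible hPirr, hP.normalize_eq_self]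
  simp [pf]

lemma phi_lb (n : ℕ) : ∀ N : Polynomial Fq, N.natDegree ≤ n → N.Monic →
    Fintype.card Fq ^ N.natDegree * ∏ P ∈ pf N, (Fintype.card Fq ^ P.natDegree - 1)
      ≤ Nat.card (cop N) * ∏ P ∈ pf N, Fintype.card Fq ^ P.natDegree := by
  induction n with
  | zero =>
    intro N hn hN
    have h1 : N = 1 := hN.natDegree_eq_zero.1 (Nat.le_zero.1 hn)
    subst h1
    simp [pf_one, cop_one_card]
  | succ n ih =>
    intro N hn hN
    rcases eq_or_ne N.natDegree 0 with h0 | h0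
    · have h1 : N = 1 := hN.natDegree_eq_zero.1 h0
      subst h1
      simp [pf_one, cop_one_card]
    · have hNunit : ¬ IsUnit N := fun h => h0 (Polynomial.natDegree_eq_zero_of_isUnit h)
      obtain ⟨p, hpirr, hpdvd⟩ :=
        WfDvdMonoid.exists_irreducible_factor hNunit hN.ne_zero
      set P := p * Polynomial.C (p.leadingCoeff)⁻¹ with hPdef
      have hPm : P.Monic := Polynomial.monic_mul_leadingCoeff_inv hpirr.ne_zero
      have hassoc : Associated p P :=
        associated_mul_unit_right p _ (Polynomial.isUnit_C.2
          (isUnit_iff_ne_zero.2 (inv_ne_zero (Polynomial.leadingCoeff_ne_zero.2 hpirr.ne_zero))))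
      have hPirr : Irreducible P := hassoc.irreducible hpirr
      have hPdvd : P ∣ N := hassoc.symm.dvd.trans hpdvd
      obtain ⟨M, hMdef⟩ := hPdvd
      have hMm : M.Monic := hPm.of_mul_monic_left (hMdef ▸ hN)
      have hdP : 0 < P.natDegree := hPirr.natDegree_pos
      have hdeg : N.natDegree = P.natDegree + M.natDegree := by
        rw [hMdef]; exact hPm.natDegree_mul hMm
      have IH := ih M (by omega) hMm
      by_cases hc : P ∣ M
      · -- P divides M
        obtain ⟨W, hW⟩ := hc
        have hW0 : W ≠ 0 := by
          rintro rfl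
          exact hMm.ne_zero (by simpa using hW)
        have hPmem : P ∈ pf M := by
          rw [pf, hW, UniqueFactorizationMonoid.normalizedFactors_mul hPirr.ne_zero hW0,
            UniqueFactorizationMonoid.normalizedFactors_irreducible hPirr, hPm.normalize_eq_self]
          simp
        have hpfN : pf N = pf M := by
          rw [hMdef, pf_mul_irreducible hPm hPirr hMm.ne_zero, Finset.insert_eq_self.2 hPmem]
        have hcard : Nat.card (cop N) = Fintype.card Fq ^ P.natDegree * Nat.card (cop M) := by
          rw [hMdef]; exact card_cop_mul_dvd hPm hMm hdP ⟨W, hW⟩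
        rw [hpfN, hcard, hdeg, pow_add]
        calc Fintype.card Fq ^ P.natDegree * Fintype.card Fq ^ M.natDegree *
              ∏ P ∈ pf M, (Fintype.card Fq ^ P.natDegree - 1)
            = Fintype.card Fq ^ P.natDegree * (Fintype.card Fq ^ M.natDegree *
              ∏ P ∈ pf M, (Fintype.card Fq ^ P.natDegree - 1)) := by ring
          _ ≤ Fintype.card Fq ^ P.natDegree * (Nat.card (cop M) *
              ∏ P ∈ pf M, Fintype.card Fq ^ P.natDegree) := mul_le_mul_right IH _
          _ = Fintype.card Fq ^ P.natDegree * Nat.card (cop M) *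
              ∏ P ∈ pf M, Fintype.card Fq ^ P.natDegree := by ring
      · -- coprime case
        have hcop : IsCoprime P M := hPirr.coprime_iff_not_dvd.2 hc
        have hPnmem : P ∉ pf M := fun hmem => hc (pf_mem hmem).2.2
        have hpfN : pf N = insert P (pf M) := by
          rw [hMdef]; exact pf_mul_irreducible hPm hPirr hMm.ne_zero
        have hcard : Nat.card (cop N)
            = (Fintype.card Fq ^ P.natDegree - 1) * Nat.card (cop M) := by
          rw [hMdef, card_cop_mul_coprime hPm hMm hcop, card_cop_irreducible hPm hPirr]
        rw [hpfN, hcard, hdeg, pow_add, Finset.prod_insert hPnmem, Finset.prod_insert hPnmem]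
        calc Fintype.card Fq ^ P.natDegree * Fintype.card Fq ^ M.natDegree *
              ((Fintype.card Fq ^ P.natDegree - 1) *
                ∏ P ∈ pf M, (Fintype.card Fq ^ P.natDegree - 1))
            = Fintype.card Fq ^ P.natDegree * (Fintype.card Fq ^ P.natDegree - 1) *
              (Fintype.card Fq ^ M.natDegree *
                ∏ P ∈ pf M, (Fintype.card Fq ^ P.natDegree - 1)) := by ring
          _ ≤ Fintype.card Fq ^ P.natDegree * (Fintype.card Fq ^ P.natDegree - 1) *
              (Nat.card (cop M) * ∏ P ∈ pf M, Fintype.card Fq ^ P.natDegree) :=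
              mul_le_mul_right IH _
          _ = (Fintype.card Fq ^ P.natDegree - 1) * Nat.card (cop M) *
              (Fintype.card Fq ^ P.natDegree *
                ∏ P ∈ pf M, Fintype.card Fq ^ P.natDegree) := by ring

lemma finite_natDegree_le (x : ℕ) : {N : Polynomial Fq | N.natDegree ≤ x}.Finite := by
  rw [← Set.finite_coe_iff]
  refine Finite.of_injective
    (fun N => (⟨N.1, ?_⟩ : {A : Polynomial Fq // A.degree < (((x+1) : ℕ) : WithBot ℕ)})) ?_
  · calc N.1.degree ≤ (N.1.natDegree : WithBot ℕ) := Polynomial.degree_le_natDegree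
      _ < (((x+1) : ℕ) : WithBot ℕ) := by exact_mod_cast Nat.lt_succ_of_le N.2
  · intro a b hab
    exact Subtype.ext (by simpa using congrArg Subtype.val hab)

lemma card_monic_exact (s : Finset (Polynomial Fq)) (n : ℕ)
    (hs : ∀ N ∈ s, N.Monic ∧ N.natDegree = n) : s.card ≤ Fintype.card Fq ^ n := by
  have hinj : Set.InjOn (fun (N : Polynomial Fq) => fun (i : Fin n) => N.coeff i) s := by
    intro N1 h1 N2 h2 hco
    obtain ⟨hm1, hd1⟩ := hs N1 h1
    obtain ⟨hm2, hd2⟩ := hs N2 h2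
    ext k
    rcases lt_trichotomy k n with hk | hk | hk
    · exact congrFun hco ⟨k, hk⟩
    · subst hk
      have e1 : N1.coeff k = 1 := by rw [← hd1]; exact hm1.coeff_natDegree
      have e2 : N2.coeff k = 1 := by rw [← hd2]; exact hm2.coeff_natDegree
      rw [e1, e2]
    · rw [Polynomial.coeff_eq_zero_of_natDegree_lt (by omega),
        Polynomial.coeff_eq_zero_of_natDegree_lt (by omega)]
  have := Finset.card_le_card_of_injOn _ (fun N _ => Finset.mem_univ _) hinj
  calc s.card ≤ (Finset.univ : Finset (Fin n → Fq)).card := this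
    _ = Fintype.card Fq ^ n := by rw [Finset.card_univ, Fintype.card_fun, Fintype.card_fin]

lemma sum_fiber_le (s : Finset (Polynomial Fq)) (w : ℕ → ℝ) (hw : ∀ n, 0 ≤ w n)
    (hmonic : ∀ N ∈ s, N.Monic) :
    ∑ N ∈ s, w N.natDegree
      ≤ ∑ n ∈ s.image (fun N => N.natDegree), ((Fintype.card Fq : ℝ) ^ n) * w n := by
  rw [Finset.sum_comp (fun n => w n) (fun N : Polynomial Fq => N.natDegree)]
  refine Finset.sum_le_sum (fun n _ => ?_)
  rw [nsmul_eq_mul]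
  refine mul_le_mul_of_nonneg_right ?_ (hw n)
  have hcard : (Finset.filter (fun N => N.natDegree = n) s).card ≤ Fintype.card Fq ^ n := by
    refine card_monic_exact _ n (fun N hN => ?_)
    have := Finset.mem_filter.1 hN
    exact ⟨hmonic N this.1, this.2⟩
  exact_mod_cast hcard

lemma hq2 : (2 : ℝ) ≤ (Fintype.card Fq : ℝ) := by exact_mod_cast Fintype.one_lt_card

lemma qd_ge_two {P : Polynomial Fq} (hd : 0 < P.natDegree) :
    (2 : ℝ) ≤ (Fintype.card Fq : ℝ) ^ P.natDegree := by
  calc (2:ℝ) ≤ (Fintype.card Fq : ℝ) ^ 1 := by simpa using hq2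
    _ ≤ (Fintype.card Fq : ℝ) ^ P.natDegree :=
      pow_le_pow_right₀ (by linarith [hq2 (Fq := Fq)]) hd

lemma eq_mul_divByMonic {D N : Polynomial Fq} (hD : D.Monic) (h : D ∣ N) :
    N = D * (N /ₘ D) := by
  obtain ⟨M, rfl⟩ := h
  rw [Polynomial.mul_divByMonic_cancel_left _ hD]

lemma prod_pf_dvd {N : Polynomial Fq} {S : Finset (Polynomial Fq)} (hS : S ⊆ pf N) :
    (∏ P ∈ S, P) ∣ N := by
  classical
  induction S using Finset.induction with
  | empty => simpa using one_dvd N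
  | @insert P S' hP ih =>
    have hPpf := hS (Finset.mem_insert_self _ _)
    have hS' : S' ⊆ pf N := fun Q hQ => hS (Finset.mem_insert_of_mem hQ)
    obtain ⟨hPm, hPirr, hPdvd⟩ := pf_mem hPpf
    have hcop : IsCoprime P (∏ Q ∈ S', Q) := by
      refine hPirr.coprime_iff_not_dvd.2 (fun hdvd => ?_)
      have hprime : Prime P := UniqueFactorizationMonoid.irreducible_iff_prime.1 hPirr
      obtain ⟨Q, hQS, hPQ⟩ := hprime.exists_mem_finset_dvd hdvd
      obtain ⟨hQm, hQirr, _⟩ := pf_mem (hS' hQS)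
      have : P = Q := Polynomial.eq_of_monic_of_associated hPm hQm
        (hPirr.associated_of_dvd hQirr hPQ)
      exact hP (this ▸ hQS)
    rw [Finset.prod_insert hP]
    exact hcop.mul_dvd hPdvd (ih hS')

lemma pointwise (N : Polynomial Fq) (hN : N.Monic) :
    (1 : ℝ) / (ffPhi N : ℝ) ≤ (1 / (Fintype.card Fq : ℝ) ^ N.natDegree) *
      ∑ S ∈ (pf N).powerset, ∏ P ∈ S, (1 / ((Fintype.card Fq : ℝ) ^ P.natDegree - 1)) := by
  classical
  set q : ℝ := (Fintype.card Fq : ℝ) with hqdef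
  have hq : (2 : ℝ) ≤ q := hq2
  have hq0 : (0 : ℝ) < q := by linarith
  have hnat := phi_lb N.natDegree N le_rfl hN
  rw [← ffPhi_eq_card hN] at hnat
  have hsub : ∀ P ∈ pf N, ((Fintype.card Fq ^ P.natDegree - 1 : ℕ) : ℝ) = q ^ P.natDegree - 1 := by
    intro P hP
    have h1 : 1 ≤ Fintype.card Fq ^ P.natDegree := Nat.one_le_pow _ _ Fintype.card_pos
    rw [Nat.cast_sub h1]
    push_cast
    ring
  have key : q ^ N.natDegree * ∏ P ∈ pf N, (q ^ P.natDegree - 1)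
      ≤ (ffPhi N : ℝ) * ∏ P ∈ pf N, q ^ P.natDegree := by
    calc q ^ N.natDegree * ∏ P ∈ pf N, (q ^ P.natDegree - 1)
        = ((Fintype.card Fq ^ N.natDegree *
            ∏ P ∈ pf N, (Fintype.card Fq ^ P.natDegree - 1) : ℕ) : ℝ) := by
          push_cast
          rw [Finset.prod_congr rfl hsub]
      _ ≤ ((ffPhi N * ∏ P ∈ pf N, Fintype.card Fq ^ P.natDegree : ℕ) : ℝ) :=
          Nat.cast_le.2 hnat
      _ = (ffPhi N : ℝ) * ∏ P ∈ pf N, q ^ P.natDegree := by push_cast; ring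
  have hApos : (0:ℝ) < ∏ P ∈ pf N, (q ^ P.natDegree - 1) :=
    Finset.prod_pos (fun P hP => by
      have := qd_ge_two (Fq := Fq) (pf_mem hP).2.1.natDegree_pos
      rw [← hqdef] at this
      linarith)
  have hBpos : (0:ℝ) < ∏ P ∈ pf N, q ^ P.natDegree :=
    Finset.prod_pos (fun P hP => pow_pos hq0 _)
  have hqn : (0:ℝ) < q ^ N.natDegree := pow_pos hq0 _
  have hapos : (0:ℝ) < (ffPhi N : ℝ) := by
    rcases Nat.eq_zero_or_pos (ffPhi N) with h | h
    · exfalso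
      rw [h] at key
      push_cast at key
      nlinarith [mul_pos hqn hApos]
    · exact_mod_cast h
  have hSig : ∑ S ∈ (pf N).powerset, ∏ P ∈ S, (1 / (q ^ P.natDegree - 1))
      = (∏ P ∈ pf N, q ^ P.natDegree) / (∏ P ∈ pf N, (q ^ P.natDegree - 1)) := by
    have h1 := Finset.prod_add (fun P : Polynomial Fq => 1 / (q ^ P.natDegree - 1))
      (fun _ => (1:ℝ)) (pf N)
    simp only [Finset.prod_const_one, mul_one] at h1
    rw [← Finset.prod_div_distrib, ← h1]
    refine Finset.prod_congr rfl (fun P hP => ?_)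
    have h2 := qd_ge_two (Fq := Fq) (pf_mem hP).2.1.natDegree_pos
    rw [← hqdef] at h2
    have h3 : q ^ P.natDegree - 1 ≠ 0 := by linarith
    field_simp
    ring
  rw [hSig]
  have hrhs : (1 / q ^ N.natDegree) *
      ((∏ P ∈ pf N, q ^ P.natDegree) / (∏ P ∈ pf N, (q ^ P.natDegree - 1)))
      = (∏ P ∈ pf N, q ^ P.natDegree) / (q ^ N.natDegree * ∏ P ∈ pf N, (q ^ P.natDegree - 1)) := by
    field_simp
  rw [hrhs, div_le_div_iff₀ hapos (mul_pos hqn hApos)]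
  calc 1 * (q ^ N.natDegree * ∏ P ∈ pf N, (q ^ P.natDegree - 1))
      = q ^ N.natDegree * ∏ P ∈ pf N, (q ^ P.natDegree - 1) := one_mul _
    _ ≤ (ffPhi N : ℝ) * ∏ P ∈ pf N, q ^ P.natDegree := key
    _ = (∏ P ∈ pf N, q ^ P.natDegree) * (ffPhi N : ℝ) := mul_comm _ _

end FFaux

/-- There is an absolute constant `C` with `∑_{N monic, deg N ≤ x} 1/φ(N) ≤ C·x`. -/
theorem sum_inv_phi_bound :
    ∃ C : ℝ, 0 < C ∧ ∀ (Fq : Type) [Field Fq] [Fintype Fq] (x : ℕ), 1 ≤ x →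
      ∑ᶠ (N : Polynomial Fq) (_ : N.Monic ∧ N.natDegree ≤ x), (1 : ℝ) / ffPhi N
        ≤ C * x := by
  classical
  refine ⟨18, by norm_num, ?_⟩
  intro Fq _ _ x hx
  set q : ℝ := (Fintype.card Fq : ℝ) with hqdef
  have hq : (2:ℝ) ≤ q := FFaux.hq2
  have hq0 : (0:ℝ) < q := by linarith
  set T : Finset (Polynomial Fq) := (FFaux.finite_natDegree_le (Fq := Fq) x).toFinset with hT
  set F : Finset (Polynomial Fq) := T.filter (fun N => N.Monic) with hF
  have hmemF : ∀ N, N ∈ F ↔ (N.Monic ∧ N.natDegree ≤ x) := by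
    intro N
    rw [hF, Finset.mem_filter, hT, Set.Finite.mem_toFinset]
    exact ⟨fun h => ⟨h.2, h.1⟩, fun h => ⟨h.2, h.1⟩⟩
  set c : Polynomial Fq → ℝ := fun P => 1 / (q ^ P.natDegree - 1) with hc
  -- Step A : rewrite the finsum as a Finset sum
  have hA : (∑ᶠ (N : Polynomial Fq) (_ : N.Monic ∧ N.natDegree ≤ x), (1 : ℝ) / ffPhi N)
      = ∑ N ∈ F, (1:ℝ) / ffPhi N := by
    have h1 : ∀ N : Polynomial Fq, (∑ᶠ (_ : N.Monic ∧ N.natDegree ≤ x), (1 : ℝ) / ffPhi N)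
        = if (N.Monic ∧ N.natDegree ≤ x) then (1:ℝ) / ffPhi N else 0 := fun N => finsum_eq_if
    rw [finsum_congr h1,
      finsum_eq_finset_sum_of_support_subset _ (s := F) ?hsupp]
    case hsupp =>
      intro N hN
      simp only [Function.mem_support] at hN
      by_cases h : N.Monic ∧ N.natDegree ≤ x
      · exact Finset.mem_coe.2 ((hmemF N).2 h)
      · rw [if_neg h] at hN; exact absurd rfl hN
    exact Finset.sum_congr rfl (fun N hN => if_pos ((hmemF N).1 hN))
  rw [hA]
  -- Step B : pointwise bound
  have hB : ∑ N ∈ F, (1:ℝ)/ffPhi N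
      ≤ ∑ N ∈ F, ((1/q^N.natDegree) * ∑ S ∈ (FFaux.pf N).powerset, ∏ P ∈ S, c P) :=
    Finset.sum_le_sum (fun N hN => FFaux.pointwise N ((hmemF N).1 hN).1)
  -- Sigma rewriting
  set dom := F.sigma (fun N => (FFaux.pf N).powerset) with hdom
  have hsig : ∑ N ∈ F, ((1/q^N.natDegree) * ∑ S ∈ (FFaux.pf N).powerset, ∏ P ∈ S, c P)
      = ∑ p ∈ dom, ((1/q^(p.1.natDegree)) * ∏ P ∈ p.2, c P) := by
    calc ∑ N ∈ F, ((1/q^N.natDegree) * ∑ S ∈ (FFaux.pf N).powerset, ∏ P ∈ S, c P)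
        = ∑ N ∈ F, ∑ S ∈ (FFaux.pf N).powerset, ((1/q^N.natDegree) * ∏ P ∈ S, c P) :=
          Finset.sum_congr rfl (fun N _ => Finset.mul_sum _ _ _)
      _ = ∑ p ∈ dom, ((1/q^(p.1.natDegree)) * ∏ P ∈ p.2, c P) := by
          rw [hdom]
          exact Finset.sum_sigma' F _ _
  -- basic facts for pairs
  have hfacts : ∀ (N : Polynomial Fq) (S : Finset (Polynomial Fq)), N ∈ F → S ⊆ FFaux.pf N →
      (∏ P ∈ S, P).Monic ∧ N = (∏ P ∈ S, P) * (N /ₘ (∏ P ∈ S, P)) ∧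
        (N /ₘ (∏ P ∈ S, P)).Monic ∧
        N.natDegree = (∏ P ∈ S, P).natDegree + (N /ₘ (∏ P ∈ S, P)).natDegree := by
    intro N S hNF hS
    have hD : (∏ P ∈ S, P).Monic :=
      Polynomial.monic_prod_of_monic _ _ (fun P hP => (FFaux.pf_mem (hS hP)).1)
    have hdvd := FFaux.prod_pf_dvd hS
    have he := FFaux.eq_mul_divByMonic hD hdvd
    have hNm : N.Monic := ((hmemF N).1 hNF).1
    have hM : (N /ₘ (∏ P ∈ S, P)).Monic := hD.of_mul_monic_left (he ▸ hNm)
    refine ⟨hD, he, hM, ?_⟩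
    conv_lhs => rw [he]
    exact hD.natDegree_mul hM
  set Pr : Finset (Polynomial Fq) := F.filter (fun P => Irreducible P) with hPr
  set g' : Finset (Polynomial Fq) × Polynomial Fq → ℝ :=
    fun y => (∏ P ∈ y.1, (c P * (1/q^P.natDegree))) * (1/q^(y.2.natDegree)) with hg'
  set i : (Σ _ : Polynomial Fq, Finset (Polynomial Fq)) → Finset (Polynomial Fq) × Polynomial Fq :=
    fun p => (p.2, p.1 /ₘ (∏ P ∈ p.2, P)) with hi
  have hmemdom : ∀ p : (Σ _ : Polynomial Fq, Finset (Polynomial Fq)), p ∈ dom →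
      p.1 ∈ F ∧ p.2 ⊆ FFaux.pf p.1 := by
    intro p hp
    rw [hdom, Finset.mem_sigma] at hp
    exact ⟨hp.1, Finset.mem_powerset.1 hp.2⟩
  -- weight equality
  have hweq : ∀ p ∈ dom, (1/q^(p.1.natDegree)) * ∏ P ∈ p.2, c P = g' (i p) := by
    rintro ⟨N, S⟩ hp
    obtain ⟨hNF, hS⟩ := hmemdom _ hp
    obtain ⟨hD, he, hM, hdeg⟩ := hfacts N S hNF hS
    have hDdeg : (∏ P ∈ S, P).natDegree = ∑ P ∈ S, P.natDegree :=
      Polynomial.natDegree_prod _ _ (fun P hP => (FFaux.pf_mem (hS hP)).1.ne_zero)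
    have hsplit : ∏ P ∈ S, (c P * (1/q^P.natDegree))
        = (∏ P ∈ S, c P) * (1/ q ^ ((∏ P ∈ S, P).natDegree)) := by
      rw [Finset.prod_mul_distrib, hDdeg, ← Finset.prod_pow_eq_pow_sum]
      simp [one_div, Finset.prod_inv_distrib]
    show (1/q^(N.natDegree)) * ∏ P ∈ S, c P
        = (∏ P ∈ S, (c P * (1/q^P.natDegree))) * (1/q^((N /ₘ (∏ P ∈ S, P)).natDegree))
    rw [hsplit, hdeg, pow_add]
    ring
  -- injectivity
  have hinj : Set.InjOn i dom := by
    rintro ⟨N, S⟩ hp ⟨N', S'⟩ hp' he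
    have h1 := hmemdom _ (by simpa using hp)
    have h2 := hmemdom _ (by simpa using hp')
    have hSS : S = S' := congrArg Prod.fst he
    subst hSS
    have hMM : N /ₘ (∏ P ∈ S, P) = N' /ₘ (∏ P ∈ S, P) := congrArg Prod.snd he
    obtain ⟨hD1, he1, _, _⟩ := hfacts N S h1.1 h1.2
    obtain ⟨hD2, he2, _, _⟩ := hfacts N' S h2.1 h2.2
    have : N = N' := by rw [he1, he2, hMM]
    subst this
    rfl
  -- map into the product
  have hmap : ∀ p ∈ dom, i p ∈ Pr.powerset ×ˢ F := by
    rintro ⟨N, S⟩ hp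
    simp only [hi]
    obtain ⟨hNF, hS⟩ := hmemdom _ hp
    obtain ⟨hD, he, hM, hdeg⟩ := hfacts N S hNF hS
    have hNx : N.natDegree ≤ x := ((hmemF N).1 hNF).2
    have hN0 : N ≠ 0 := ((hmemF N).1 hNF).1.ne_zero
    rw [Finset.mem_product]
    constructor
    · rw [Finset.mem_powerset]
      intro P hP
      obtain ⟨hPm, hPirr, hPdvd⟩ := FFaux.pf_mem (hS hP)
      rw [hPr, Finset.mem_filter]
      refine ⟨(hmemF P).2 ⟨hPm, le_trans (Polynomial.natDegree_le_of_dvd hPdvd hN0) hNx⟩, hPirr⟩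
    · refine (hmemF _).2 ⟨hM, ?_⟩
      show (N /ₘ ∏ P ∈ S, P).natDegree ≤ x
      omega
  -- sum over image and extend
  have hcnonneg : ∀ P : Polynomial Fq, 0 ≤ c P := by
    intro P
    rw [hc]
    refine div_nonneg zero_le_one ?_
    have h1 : (1:ℝ) ≤ q ^ P.natDegree := one_le_pow₀ (by linarith)
    linarith
  have hg'nonneg : ∀ y : Finset (Polynomial Fq) × Polynomial Fq, 0 ≤ g' y := by
    intro y
    refine mul_nonneg (Finset.prod_nonneg (fun P _ => mul_nonneg (hcnonneg P) ?_)) ?_ <;>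
      positivity
  have hchain : ∑ p ∈ dom, ((1/q^(p.1.natDegree)) * ∏ P ∈ p.2, c P)
      ≤ ∑ y ∈ Pr.powerset ×ˢ F, g' y := by
    calc ∑ p ∈ dom, ((1/q^(p.1.natDegree)) * ∏ P ∈ p.2, c P)
        = ∑ p ∈ dom, g' (i p) := Finset.sum_congr rfl hweq
      _ = ∑ y ∈ dom.image i, g' y := (Finset.sum_image (fun a ha b hb hab => hinj ha hb hab)).symm
      _ ≤ ∑ y ∈ Pr.powerset ×ˢ F, g' y := by
          refine Finset.sum_le_sum_of_subset_of_nonneg ?_ (fun y _ _ => hg'nonneg y)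
          intro y hy
          obtain ⟨p, hp, rfl⟩ := Finset.mem_image.1 hy
          exact hmap p hp
  have hfact : ∑ y ∈ Pr.powerset ×ˢ F, g' y
      = (∑ S ∈ Pr.powerset, ∏ P ∈ S, (c P * (1/q^P.natDegree))) * (∑ M ∈ F, 1/q^M.natDegree) := by
    rw [Finset.sum_product]
    simp only [hg']
    exact (Finset.sum_mul_sum _ _ _ _).symm
  -- Step D : the M-sum
  have hD2 : ∑ M ∈ F, (1:ℝ)/q^M.natDegree ≤ (x:ℝ) + 1 := by
    have h1 := FFaux.sum_fiber_le F (fun n => 1/q^n) (fun n => by positivity)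
      (fun N hN => ((hmemF N).1 hN).1)
    refine le_trans h1 ?_
    have h2 : ∀ n ∈ F.image (fun N : Polynomial Fq => N.natDegree), q^n * (1/q^n) = 1 := by
      intro n _
      field_simp
    rw [Finset.sum_congr rfl h2, Finset.sum_const, nsmul_eq_mul, mul_one]
    have h3 : (F.image (fun N : Polynomial Fq => N.natDegree)) ⊆ Finset.range (x+1) := by
      intro n hn
      obtain ⟨N, hN, rfl⟩ := Finset.mem_image.1 hn
      exact Finset.mem_range.2 (Nat.lt_succ_of_le ((hmemF N).1 hN).2)
    calc ((F.image (fun N : Polynomial Fq => N.natDegree)).card : ℝ)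
        ≤ ((Finset.range (x+1)).card : ℝ) := by exact_mod_cast Finset.card_le_card h3
      _ = (x:ℝ) + 1 := by simp
  -- Step E : the prime sum
  have hE : ∑ S ∈ Pr.powerset, ∏ P ∈ S, (c P * (1/q^P.natDegree)) ≤ 9 := by
    have h1 := Finset.prod_add (fun P : Polynomial Fq => c P * (1/q^P.natDegree))
      (fun _ => (1:ℝ)) Pr
    simp only [Finset.prod_const_one, mul_one] at h1
    rw [← h1]
    have h2 : ∏ P ∈ Pr, (c P * (1/q^P.natDegree) + 1)
        ≤ Real.exp (∑ P ∈ Pr, (c P * (1/q^P.natDegree))) := by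
      rw [Real.exp_sum]
      refine Finset.prod_le_prod (fun P _ => ?_) (fun P _ => ?_)
      · have := mul_nonneg (hcnonneg P) (le_of_lt (by positivity : (0:ℝ) < 1/q^P.natDegree))
        linarith
      · have := Real.add_one_le_exp (c P * (1/q^P.natDegree))
        linarith
    have h3 : ∑ P ∈ Pr, (c P * (1/q^P.natDegree)) ≤ 2 := by
      have h4 := FFaux.sum_fiber_le Pr (fun n => (1/(q^n - 1)) * (1/q^n))
        (fun n => by
          refine mul_nonneg (div_nonneg zero_le_one ?_) (le_of_lt (by positivity))
          have h5 : (1:ℝ) ≤ q ^ n := one_le_pow₀ (by linarith)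
          linarith)
        (fun P hP => ((hmemF P).1 (Finset.mem_filter.1 hP).1).1)
      refine le_trans h4 ?_
      have himg1 : Pr.image (fun N : Polynomial Fq => N.natDegree) ⊆ Finset.Icc 1 x := by
        intro n hn
        obtain ⟨P, hP, rfl⟩ := Finset.mem_image.1 hn
        have h6 := Finset.mem_filter.1 hP
        exact Finset.mem_Icc.2 ⟨h6.2.natDegree_pos, ((hmemF P).1 h6.1).2⟩
      have hterm : ∀ n ∈ Pr.image (fun N : Polynomial Fq => N.natDegree),
          q^n * ((1/(q^n - 1)) * (1/q^n)) ≤ 2 * (1/2)^n := by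
        intro n hn
        have hn1 : 1 ≤ n := (Finset.mem_Icc.1 (himg1 hn)).1
        have hq2n : (2:ℝ) ≤ q^n := by
          calc (2:ℝ) ≤ q^1 := by simpa using hq
            _ ≤ q^n := pow_le_pow_right₀ (by linarith) hn1
        have hqn0 : (0:ℝ) < q^n := by positivity
        have hm0 : q ^ n - 1 ≠ 0 := by linarith
        have e1 : q^n * ((1/(q^n - 1)) * (1/q^n)) = 1/(q^n - 1) := by
          field_simp
        rw [e1]
        have h2n : (2:ℝ)^n ≤ q^n := pow_le_pow_left₀ (by norm_num) hq n
        have e2 : (2:ℝ) * (1/2)^n = 2 / 2^n := by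
          rw [one_div, inv_pow, ← one_div, mul_one_div]
        rw [e2]
        rw [div_le_div_iff₀ (by linarith) (by positivity)]
        nlinarith
      calc ∑ n ∈ Pr.image (fun N : Polynomial Fq => N.natDegree),
            q^n * ((1/(q^n - 1)) * (1/q^n))
          ≤ ∑ n ∈ Pr.image (fun N : Polynomial Fq => N.natDegree), 2 * (1/2:ℝ)^n :=
            Finset.sum_le_sum hterm
        _ ≤ ∑ n ∈ Finset.Icc 1 x, 2 * (1/2:ℝ)^n :=
            Finset.sum_le_sum_of_subset_of_nonneg himg1 (fun n _ _ => by positivity)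
        _ ≤ 2 := by
            rw [← Finset.mul_sum]
            have h7 : ∑ n ∈ Finset.Icc 1 x, (1/2:ℝ)^n ≤ 1 := by
              rw [← Finset.Ico_add_one_right_eq_Icc, Finset.sum_Ico_eq_sum_range]
              have h8 : ∀ k, (1/2:ℝ)^(1+k) = (1/2) * (1/2)^k := fun k => by
                rw [pow_add]; ring
              rw [Finset.sum_congr rfl (fun k _ => h8 k), ← Finset.mul_sum]
              have h9 := sum_geometric_two_le (x + 1 - 1)
              linarith
            linarith
    have h5 : Real.exp 2 ≤ 9 := by
      have h6 := Real.exp_one_lt_d9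
      have h7 : Real.exp 2 = Real.exp 1 * Real.exp 1 := by
        rw [← Real.exp_add]; norm_num
      nlinarith [Real.exp_pos 1]
    calc ∏ P ∈ Pr, (c P * (1/q^P.natDegree) + 1)
        ≤ Real.exp (∑ P ∈ Pr, (c P * (1/q^P.natDegree))) := h2
      _ ≤ Real.exp 2 := Real.exp_le_exp.2 h3
      _ ≤ 9 := h5
  -- final assembly
  have hsumM_nonneg : (0:ℝ) ≤ ∑ M ∈ F, (1:ℝ)/q^M.natDegree :=
    Finset.sum_nonneg (fun M _ => by positivity)
  calc ∑ N ∈ F, (1:ℝ) / ffPhi N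
      ≤ ∑ N ∈ F, ((1/q^N.natDegree) * ∑ S ∈ (FFaux.pf N).powerset, ∏ P ∈ S, c P) := hB
    _ = ∑ p ∈ dom, ((1/q^(p.1.natDegree)) * ∏ P ∈ p.2, c P) := hsig
    _ ≤ ∑ y ∈ Pr.powerset ×ˢ F, g' y := hchain
    _ = (∑ S ∈ Pr.powerset, ∏ P ∈ S, (c P * (1/q^P.natDegree))) * (∑ M ∈ F, 1/q^M.natDegree) := hfact
    _ ≤ 9 * ((x:ℝ) + 1) := mul_le_mul hE hD2 hsumM_nonneg (by norm_num)
    _ ≤ 18 * x := by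
        have : (1:ℝ) ≤ (x:ℝ) := by exact_mod_cast hx
        linarith
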